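/- Let S be a Borel automorphism of a standard Borel space (X, 𝓑) whose support {x ∈ X : Sx ≠ x} is uncountable. Then there exist a non-atomic Borel probability measure ν on X and ε > 0 such that every Borel automorphism R of X with ν(E(R,S)) < ε has uncountable support. (The group Ctbl(X) of automorphisms with countable support is closed in the uniform topology τ.) -/

import Mathlib

open MeasureTheory Set
open scoped ENNReal

/-- `T` is a Borel automorphism: both `T` and its inverse are measurable. -/
def IsBorelAuto {X : Type*} [MeasurableSpace X] (T : Equiv.Perm X) : Prop :=
  Measurable T ∧ Measurable T.symm

/-- The set on which `S` and `T` (or their inverses) differ. -/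
def Eset {X : Type*} (S T : Equiv.Perm X) : Set X :=
  {x | S x ≠ T x} ∪ {x | S⁻¹ x ≠ T⁻¹ x}

/-- `Ctbl(X)` is closed in the uniform topology `τ`. -/
theorem ctbl_closed_uniform {X : Type*} [MeasurableSpace X] [StandardBorelSpace X]
    (S : Equiv.Perm X) (hS : IsBorelAuto S)
    (hsupp : ¬ {x : X | S x ≠ x}.Countable) :
    ∃ ν : Measure X, IsProbabilityMeasure ν ∧ (∀ x : X, ν {x} = 0) ∧
      ∃ ε : ℝ≥0∞, 0 < ε ∧
        ∀ R : Equiv.Perm X, IsBorelAuto R → ν (Eset R S) < ε →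
          ¬ {x : X | R x ≠ x}.Countable := by
  classical
  -- The support of `S` is a measurable set.
  have hA : MeasurableSet {x : X | S x ≠ x} := by
    letI := upgradeStandardBorel X
    have : MeasurableSet {x : X | S x = x} :=
      MeasureTheory.StronglyMeasurable.measurableSet_eq_fun hS.1.stronglyMeasurable stronglyMeasurable_id
    exact this.compl
  set A : Set X := {x : X | S x ≠ x} with hAdef
  haveI : StandardBorelSpace A := hA.standardBorel
  have hAunc : ¬ Countable A := by
    rwa [countable_coe_iff]
  -- Borel isomorphism from ℝ onto the support of S
  let e : (↥A) ≃ᵐ ℝ :=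
    PolishSpace.measurableEquivOfNotCountable hAunc (fun h => Cardinal.not_countable_real (@Set.countable_univ ℝ h))
  let f : ℝ → X := fun r => ((e.symm r : A) : X)
  have hf : Measurable f := measurable_subtype_coe.comp e.symm.measurable
  have hfinj : Function.Injective f :=
    Subtype.val_injective.comp e.symm.injective
  have hfA : ∀ r, f r ∈ A := fun r => (e.symm r).2
  let μ : Measure ℝ := volume.restrict (Set.Icc (0:ℝ) 1)
  haveI : IsProbabilityMeasure μ := ⟨by
    simp [μ, Real.volume_Icc]⟩
  let ν : Measure X := μ.map f
  haveI : IsProbabilityMeasure ν := Measure.isProbabilityMeasure_map hf.aemeasurable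
  have hν : ∀ x : X, ν {x} = 0 := by
    intro x
    rw [Measure.map_apply hf (measurableSet_singleton x)]
    have hsub : (f ⁻¹' {x}).Subsingleton := fun a ha b hb =>
      hfinj (ha.trans hb.symm)
    exact hsub.measure_zero μ
  haveI : NoAtoms ν := ⟨hν⟩
  have hνA : ν A = 1 := by
    rw [Measure.map_apply hf hA]
    have : f ⁻¹' A = Set.univ := Set.eq_univ_of_forall fun r => hfA r
    rw [this]
    exact measure_univ
  refine ⟨ν, inferInstance, hν, 1, zero_lt_one, ?_⟩
  intro R hR hlt hcnt
  have hC : ν {x : X | R x ≠ x} = 0 := by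
    haveI : NullSingletonClass ν := ⟨hν⟩
    exact hcnt.measure_zero ν
  have hsub : A \ {x : X | R x ≠ x} ⊆ Eset R S := by
    intro x hx
    left
    have hRx : R x = x := by
      by_contra h
      exact hx.2 h
    have hSx : S x ≠ x := hx.1
    simpa [hRx] using fun h => hSx h.symm
  have : (1 : ℝ≥0∞) ≤ ν (Eset R S) := by
    calc (1 : ℝ≥0∞) = ν A := hνA.symm
    _ = ν (A \ {x : X | R x ≠ x}) := (measure_diff_null hC).symm
    _ ≤ ν (Eset R S) := measure_mono hsub
  exact absurd hlt (not_lt.mpr this)
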